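/- Let A → B and B → C be ring homomorphisms which are flat with geometrically reduced fibres (reduced homomorphisms). Then the composition A → C is flat with geometrically reduced fibres. Moreover, if A → C and B → C are reduced and B → C is faithfully flat, then A → B is reduced. -/

import Mathlib

open TensorProduct

universe u

/-- A ring homomorphism `f : A → B` is *reduced* if it is flat and has geometrically reduced
fibres, i.e. `L ⊗_A B` is reduced for every field `L` equipped with an `A`-algebra structure
(equivalently, for every field extension of a residue field of `A`). -/
def IsReducedRingHom {A B : Type u} [CommRing A] [CommRing B] (f : A →+* B) : Prop :=
  (letI := f.toAlgebra; Module.Flat A B) ∧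
    ∀ (L : Type u) (_ : Field L) (_ : Algebra A L),
      letI := f.toAlgebra
      IsReduced (L ⊗[A] B)

/-- If `p` is a minimal prime over `I` and `a ∈ p`, then some power of `a` times an element
outside `p` lies in `I`. -/
lemma IsReducedRingHom.aux_minimal_prime {R : Type u} [CommRing R] {I p : Ideal R}
    (hp : p ∈ I.minimalPrimes) {a : R} (ha : a ∈ p) :
    ∃ (n : ℕ) (s : R), s ∉ p ∧ s * a ^ (n + 1) ∈ I := by
  obtain ⟨⟨hpp, hIp⟩, hmin⟩ := hp
  by_contra hcon
  push_neg at hcon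
  set T : Submonoid R :=
    { carrier := {r | ∃ (n : ℕ) (s : R), s ∉ p ∧ r = s * a ^ n}
      mul_mem' := by
        rintro r r' ⟨n, s, hs, rfl⟩ ⟨n', s', hs', rfl⟩
        exact ⟨n + n', s * s', fun h => ((hpp.mem_or_mem h).elim hs hs'), by ring⟩
      one_mem' := ⟨0, 1, fun h => hpp.ne_top ((Ideal.eq_top_iff_one p).2 h), by ring⟩ } with hT
  have hdisj : Disjoint (I : Set R) (T : Set R) := by
    rw [Set.disjoint_left]
    rintro r hrI ⟨n, s, hs, rfl⟩
    rcases n with _ | n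
    · exact hs (hIp (by simpa using hrI))
    · exact hcon n s hs hrI
  obtain ⟨q, hq, hIq, hqT⟩ := Ideal.exists_le_prime_disjoint I T hdisj
  have hqp : q ≤ p := by
    intro r hr
    by_contra hrp
    exact Set.disjoint_left.1 hqT hr ⟨0, r, hrp, by ring⟩
  have hpq : p ≤ q := hmin ⟨hq, hIq⟩ hqp
  exact Set.disjoint_left.1 hqT (hpq ha)
    ⟨1, 1, fun h => hpp.ne_top ((Ideal.eq_top_iff_one p).2 h), by ring⟩

set_option maxHeartbeats 1000000 in
set_option synthInstance.maxHeartbeats 200000 in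
/-- The key lemma: if `C` is a flat `B`-algebra with geometrically reduced fibres and `R`
is a reduced `B`-algebra, then `R ⊗[B] C` is reduced. -/
lemma IsReducedRingHom.isReduced_tensor {B R C : Type u} [CommRing B] [CommRing R] [CommRing C]
    [Algebra B R] [Algebra B C] [IsReduced R] [Module.Flat B C]
    (hfib : ∀ (L : Type u) (_ : Field L) (_ : Algebra B L), IsReduced (L ⊗[B] C)) :
    IsReduced (R ⊗[B] C) := by
  refine ⟨fun x hx => ?_⟩
  by_contra hx0
  classical
  -- the annihilator of `x` in `R`
  set I : Ideal R := Ideal.torsionOf R (R ⊗[B] C) x with hIdef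
  have hI : I ≠ ⊤ := by
    intro h
    have h1 : (1 : R) ∈ I := by rw [h]; trivial
    exact hx0 (by simpa using (Ideal.mem_torsionOf_iff x (1 : R)).1 h1)
  -- a minimal prime over I
  obtain ⟨m, hm, hIm⟩ := Ideal.exists_le_maximal I hI
  haveI := hm.isPrime
  obtain ⟨p, hp, -⟩ := Ideal.exists_minimalPrimes_le hIm
  have hpp : p.IsPrime := hp.1.1
  have hIp : I ≤ p := hp.1.2
  haveI := hpp
  -- the residue field at p
  set κ := FractionRing (R ⧸ p) with hκ
  haveI hκred : IsReduced (κ ⊗[B] C) := hfib κ inferInstance inferInstance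
  -- the B-algebra map ψ : R → κ and χ : R ⊗ C → κ ⊗ C
  set πa : R →ₐ[B] R ⧸ p := Ideal.Quotient.mkₐ B p with hπa
  set ιa : (R ⧸ p) →ₐ[B] κ :=
    { toRingHom := algebraMap (R ⧸ p) κ,
      commutes' := fun b => (IsScalarTower.algebraMap_apply B (R ⧸ p) κ b).symm } with hιa
  set χ : (R ⊗[B] C) →ₐ[B] (κ ⊗[B] C) :=
    Algebra.TensorProduct.map (ιa.comp πa) (AlgHom.id B C) with hχ
  have hχx : χ x = 0 := IsNilpotent.eq_zero (IsNilpotent.map hx χ.toRingHom)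
  -- factor χ through (R ⧸ p) ⊗ C
  have hfact : χ.toLinearMap =
      (LinearMap.rTensor C ιa.toLinearMap).comp (LinearMap.rTensor C πa.toLinearMap) := by
    apply TensorProduct.ext'
    intro r c
    simp [hχ]
  have hπx : LinearMap.rTensor C πa.toLinearMap x = 0 := by
    have hinj : Function.Injective (LinearMap.rTensor C ιa.toLinearMap) :=
      Module.Flat.rTensor_preserves_injective_linearMap (M := C) ιa.toLinearMap
        (IsFractionRing.injective (R ⧸ p) κ)
    apply hinj
    rw [map_zero, ← LinearMap.comp_apply, ← hfact]
    exact hχx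
  -- write x as the image of an element of p ⊗ C
  set f0 : (↥p) →ₗ[B] R := (Submodule.subtype p).restrictScalars B with hf0
  have hex : Function.Exact f0 πa.toLinearMap := by
    intro y
    constructor
    · intro hy
      have : y ∈ p := by
        rwa [show πa.toLinearMap y = Ideal.Quotient.mk p y from rfl,
          Ideal.Quotient.eq_zero_iff_mem] at hy
      exact ⟨⟨y, this⟩, rfl⟩
    · rintro ⟨⟨y, hy⟩, rfl⟩
      show Ideal.Quotient.mk p y = 0
      rwa [Ideal.Quotient.eq_zero_iff_mem]
  have hexT : Function.Exact (LinearMap.rTensor C f0) (LinearMap.rTensor C πa.toLinearMap) :=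
    rTensor_exact C hex (fun z => by
      obtain ⟨r, hr⟩ := Ideal.Quotient.mk_surjective z
      exact ⟨r, hr⟩)
  obtain ⟨ξ, hξ⟩ := (hexT x).mp hπx
  obtain ⟨t, ht⟩ := TensorProduct.exists_finset ξ
  have hxsum : x = ∑ i ∈ t, ((i.1 : R) ⊗ₜ[B] i.2) := by
    rw [← hξ, ht, map_sum]
    exact Finset.sum_congr rfl fun i _ => rfl
  -- choose the data from the minimal prime lemma
  have Hns : ∀ i : (↥p) × C, ∃ (n : ℕ) (s : R), s ∉ p ∧ s * (i.1 : R) ^ (n + 1) ∈ I :=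
    fun i => IsReducedRingHom.aux_minimal_prime hp i.1.2
  choose nn ss hss hmem using Hns
  set σ : R := ∏ i ∈ t, ss i with hσdef
  have hσ : σ ∉ p := by
    have : σ ∈ p.primeCompl := Submonoid.prod_mem _ (fun i _ => hss i)
    exact this
  set z : (↥p) × C → R := fun i => σ * (i.1 : R) with hz
  set x₂ : R ⊗[B] C := σ • x with hx₂def
  have hx₂sum : x₂ = ∑ i ∈ t, (z i ⊗ₜ[B] i.2) := by
    rw [hx₂def, hxsum, Finset.smul_sum]
    exact Finset.sum_congr rfl fun i _ => by
      rw [TensorProduct.smul_tmul', smul_eq_mul]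
  have hzI : ∀ i ∈ t, z i ^ (nn i + 1) ∈ I := by
    intro i hi
    have hσP : σ = ss i * ∏ j ∈ t.erase i, ss j := (Finset.mul_prod_erase t ss hi).symm
    have : z i ^ (nn i + 1) =
        (σ ^ nn i * ∏ j ∈ t.erase i, ss j) * (ss i * (i.1 : R) ^ (nn i + 1)) := by
      have h4 : z i ^ (nn i + 1) = σ ^ (nn i) * σ * (i.1 : R) ^ (nn i + 1) := by
        simp only [hz]
        ring
      rw [h4, hσP]
      ring
    rw [this]
    exact I.mul_mem_left _ (hmem i)
  have hkill : ∀ i ∈ t, z i ^ (nn i + 1) • x₂ = 0 := by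
    intro i hi
    rw [hx₂def, smul_smul, mul_comm, ← smul_smul,
      (Ideal.mem_torsionOf_iff x _).1 (hzI i hi), smul_zero]
  -- the ideals J and W
  set J : Ideal R := Ideal.span (z '' ↑t) with hJ
  have hJz : ∀ i ∈ t, z i ∈ J := fun i hi => Ideal.subset_span ⟨i, hi, rfl⟩
  set W : Ideal R := Ideal.span ((fun i => z i ^ (nn i + 1)) '' ↑t) with hW
  have hJW : ∀ b : R, b ∈ J → ∃ k, b ^ k ∈ W := by
    intro b hb
    have hle : J ≤ W.radical := by
      rw [hJ, Ideal.span_le]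
      rintro _ ⟨i, hi, rfl⟩
      exact ⟨nn i + 1, Ideal.subset_span ⟨i, hi, rfl⟩⟩
    exact hle hb
  -- the injective map φm : J → (t → R)
  set φm : (↥J) →ₗ[B] ({i : (↥p) × C // i ∈ t} → R) :=
    { toFun := fun b j => z j.1 ^ (nn j.1 + 1) * (b : R)
      map_add' := by
        intro b b'
        funext j
        simp [mul_add]
      map_smul' := by
        intro β b
        funext j
        simp [Submodule.coe_smul_of_tower, mul_smul_comm] } with hφm
  have hφinj : Function.Injective φm := by
    rw [← LinearMap.ker_eq_bot, LinearMap.ker_eq_bot']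
    intro b hb0
    have hbW : ∀ w ∈ W, w * (b : R) = 0 := by
      intro w hw
      induction hw using Submodule.span_induction with
      | mem w hw =>
        obtain ⟨i, hi, rfl⟩ := hw
        exact congr_fun (congrArg (fun h => h) hb0) ⟨i, hi⟩
      | zero => rw [zero_mul]
      | add w w' _ _ h1 h2 => rw [add_mul, h1, h2, add_zero]
      | smul r w _ h1 => rw [smul_eq_mul, mul_assoc, h1, mul_zero]
    obtain ⟨k, hk⟩ := hJW (b : R) b.2
    have hbz : (b : R) ^ (k + 1) = 0 := by
      rw [pow_succ, ← hbW _ hk, mul_comm]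
    have : (b : R) = 0 := IsReduced.eq_zero _ ⟨k + 1, hbz⟩
    exact Subtype.ext this
  -- the element ξ₂ of C ⊗ J and the vanishing computation
  set ξ₂ : C ⊗[B] (↥J) := ∑ i ∈ t.attach, i.1.2 ⊗ₜ[B] (⟨z i.1, hJz i.1 i.2⟩ : ↥J) with hξ₂
  set Θ : C ⊗[B] (↥J) →ₗ[B] ({i : (↥p) × C // i ∈ t} → C ⊗[B] R) :=
    (TensorProduct.piRight B B C (fun _ : {i : (↥p) × C // i ∈ t} => R)).toLinearMap.comp
      (LinearMap.lTensor C φm) with hΘ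
  have hΘ0 : Θ ξ₂ = 0 := by
    funext j
    have h1 : Θ ξ₂ j = ∑ i ∈ t.attach, (i.1.2 ⊗ₜ[B] (z j.1 ^ (nn j.1 + 1) * z i.1) : C ⊗[B] R) := by
      rw [hΘ, hξ₂]
      simp only [LinearMap.comp_apply, map_sum, LinearMap.lTensor_tmul,
        LinearEquiv.coe_coe, TensorProduct.piRight_apply, TensorProduct.piRightHom_tmul]
      rw [Finset.sum_apply]
      rfl
    rw [h1]
    have h2 : ∀ w : C ⊗[B] R, (TensorProduct.comm B C R) w = 0 → w = 0 := by
      intro w hw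
      have := congrArg (TensorProduct.comm B C R).symm hw
      simpa using this
    apply h2
    rw [map_sum]
    simp only [TensorProduct.comm_tmul]
    have h3 : ∑ i ∈ t.attach, ((z j.1 ^ (nn j.1 + 1) * z i.1) ⊗ₜ[B] i.1.2 : R ⊗[B] C)
        = z j.1 ^ (nn j.1 + 1) • x₂ := by
      rw [hx₂sum, Finset.smul_sum]
      rw [← Finset.sum_attach t (fun i => (z j.1 ^ (nn j.1 + 1)) • (z i ⊗ₜ[B] i.2))]
      exact Finset.sum_congr rfl fun i _ => by
        rw [TensorProduct.smul_tmul', smul_eq_mul]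
    rw [h3, hkill j.1 j.2]
  have hξ₂0 : ξ₂ = 0 := by
    have hinj : Function.Injective Θ := by
      rw [hΘ, LinearMap.coe_comp]
      exact Function.Injective.comp (LinearEquiv.injective _)
        (Module.Flat.lTensor_preserves_injective_linearMap φm hφinj)
    apply hinj
    rw [hΘ0, map_zero]
  -- conclude x₂ = 0 and the final contradiction
  have hx₂0 : x₂ = 0 := by
    have : x₂ = ((TensorProduct.comm B C R).toLinearMap.comp
        (LinearMap.lTensor C ((Submodule.subtype J).restrictScalars B))) ξ₂ := by
      rw [hξ₂, map_sum, hx₂sum]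
      rw [← Finset.sum_attach t (fun i => z i ⊗ₜ[B] i.2)]
      exact Finset.sum_congr rfl fun i _ => by
        simp [TensorProduct.comm_tmul]
    rw [this, hξ₂0, map_zero]
  exact hσ (hIp ((Ideal.mem_torsionOf_iff x σ).2 hx₂0))

/-- Faithfully flat modules reflect injectivity under `lTensor`. -/
lemma IsReducedRingHom.injective_of_lTensor_injective {B C : Type u} [CommRing B] [CommRing C]
    [Algebra B C] [Module.FaithfullyFlat B C] {M N : Type u} [AddCommGroup M] [Module B M]
    [AddCommGroup N] [Module B N] (φ : M →ₗ[B] N)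
    (h : Function.Injective (LinearMap.lTensor C φ)) : Function.Injective φ := by
  have hker : ∀ w : C ⊗[B] ↥(LinearMap.ker φ),
      LinearMap.lTensor C ((LinearMap.ker φ).subtype) w = 0 := by
    intro w
    apply h
    rw [map_zero, ← LinearMap.lTensor_comp_apply]
    have h0 : φ ∘ₗ (LinearMap.ker φ).subtype = 0 := by
      ext ⟨y, hy⟩
      exact hy
    rw [h0, LinearMap.lTensor_zero, LinearMap.zero_apply]
  have hz : ∀ w : C ⊗[B] ↥(LinearMap.ker φ), w = 0 := by
    intro w
    apply Module.Flat.lTensor_preserves_injective_linearMap (M := C) _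
      (Submodule.injective_subtype (LinearMap.ker φ))
    rw [hker w, map_zero]
  haveI : Subsingleton (C ⊗[B] ↥(LinearMap.ker φ)) := ⟨fun a b => by rw [hz a, hz b]⟩
  haveI := Module.FaithfullyFlat.lTensor_reflects_triviality B C ↥(LinearMap.ker φ)
  intro a b hab
  have : a - b ∈ LinearMap.ker φ := by
    rw [LinearMap.mem_ker, map_sub, hab, sub_self]
  have h1 : (⟨a - b, this⟩ : ↥(LinearMap.ker φ)) = 0 := Subsingleton.elim _ _
  have h2 : a - b = 0 := congrArg Subtype.val h1
  exact sub_eq_zero.1 h2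

/-- For faithfully flat `C` over `B`, the map `m ↦ m ⊗ 1` is injective. -/
lemma IsReducedRingHom.tmul_one_eq_zero {B C : Type u} [CommRing B] [CommRing C] [Algebra B C]
    [Module.FaithfullyFlat B C] {M : Type u} [AddCommGroup M] [Module B M]
    (m : M) (hm : m ⊗ₜ[B] (1 : C) = 0) : m = 0 := by
  by_contra hm0
  set I := (Submodule.span B {m}).annihilator with hIdef
  have hI : I ≠ ⊤ := by
    intro h
    have h1 : (1 : B) ∈ I := by rw [h]; trivial
    rw [hIdef, Submodule.mem_annihilator_span_singleton, one_smul] at h1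
    exact hm0 h1
  set inc : (B ⧸ I) →ₗ[B] M := Submodule.liftQ _ ((LinearMap.lsmul B M).flip m) (by
    intro r hr
    simpa only [LinearMap.mem_ker, LinearMap.flip_apply, LinearMap.lsmul_apply, hIdef,
      Submodule.mem_annihilator_span_singleton] using hr) with hinc
  have hincinj : Function.Injective inc := by
    rw [← LinearMap.ker_eq_bot]
    refine eq_bot_iff.2 fun r hr => ?_
    induction r using Quotient.inductionOn' with | h r =>
    simpa only [Submodule.Quotient.mk''_eq_mk, Submodule.mem_bot, Submodule.Quotient.mk_eq_zero,
      hIdef, Submodule.mem_annihilator_span_singleton, LinearMap.mem_ker, hinc,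
      Submodule.liftQ_apply, LinearMap.flip_apply, LinearMap.lsmul_apply] using hr
  have h2 : ((Ideal.Quotient.mk I (1 : B)) ⊗ₜ[B] (1 : C)) = 0 := by
    apply Module.Flat.rTensor_preserves_injective_linearMap (M := C) inc hincinj
    rw [map_zero, LinearMap.rTensor_tmul]
    have h6 : inc (Ideal.Quotient.mk I (1 : B)) = m := by
      have : inc (Ideal.Quotient.mk I (1 : B)) = (1 : B) • m := rfl
      rw [this, one_smul]
    rw [h6, hm]
  have h3 := congrArg (TensorProduct.quotTensorEquivQuotSMul C I) h2
  rw [TensorProduct.quotTensorEquivQuotSMul_mk_tmul, map_zero, one_smul] at h3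
  have h4 : (1 : C) ∈ I • (⊤ : Submodule B C) := by
    rwa [Submodule.Quotient.mk_eq_zero] at h3
  have h5 : I • (⊤ : Submodule B C) = ⊤ := by
    rw [Ideal.smul_top_eq_map] at h4 ⊢
    have : I.map (algebraMap B C) = ⊤ := (Ideal.eq_top_iff_one _).2 h4
    rw [this]
    rfl
  exact (Module.FaithfullyFlat.iff_flat_and_proper_ideal B C).1 inferInstance |>.2 I hI h5

set_option maxHeartbeats 2000000 in
/-- The canonical mutually-inverse ring homomorphisms between `L ⊗[A] C` and
`(L ⊗[A] B) ⊗[B] C`. -/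
lemma IsReducedRingHom.exists_tensor_homs {A B C : Type u} [CommRing A] [CommRing B] [CommRing C]
    [Algebra A B] [Algebra B C] [Algebra A C] [IsScalarTower A B C]
    (L : Type u) [CommRing L] [Algebra A L] :
    letI : Algebra B (L ⊗[A] B) := Algebra.TensorProduct.rightAlgebra
    ∃ (Φ : (L ⊗[A] C) →+* ((L ⊗[A] B) ⊗[B] C))
      (Φ' : ((L ⊗[A] B) ⊗[B] C) →+* (L ⊗[A] C)),
      (∀ y, Φ' (Φ y) = y) ∧ (∀ z, Φ (Φ' z) = z) ∧
      (∀ (l : L) (b : B) (c : C), Φ' ((l ⊗ₜ[A] b) ⊗ₜ[B] c) = l ⊗ₜ[A] (algebraMap B C b * c)) := by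
  letI : Algebra B (L ⊗[A] B) := Algebra.TensorProduct.rightAlgebra
  haveI : SMulCommClass B A (L ⊗[A] B) :=
    ⟨fun b a x => by simp only [Algebra.smul_def]; ring⟩
  letI : Algebra A ((L ⊗[A] B) ⊗[B] C) := Algebra.TensorProduct.leftAlgebra
  letI : Algebra B (L ⊗[A] C) :=
    ((Algebra.TensorProduct.includeRight : C →ₐ[A] L ⊗[A] C).toRingHom.comp
      (algebraMap B C)).toAlgebra
  -- the forward map
  set fL : L →ₐ[A] ((L ⊗[A] B) ⊗[B] C) :=
    { toRingHom :=
        (Algebra.TensorProduct.includeLeftRingHom :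
            (L ⊗[A] B) →+* ((L ⊗[A] B) ⊗[B] C)).comp
          (Algebra.TensorProduct.includeLeftRingHom : L →+* (L ⊗[A] B))
      commutes' := fun a => rfl } with hfL
  set fC : C →ₐ[A] ((L ⊗[A] B) ⊗[B] C) :=
    { toRingHom := (Algebra.TensorProduct.includeRight : C →ₐ[B] ((L ⊗[A] B) ⊗[B] C)).toRingHom
      commutes' := fun a => by
        show (1 : L ⊗[A] B) ⊗ₜ[B] (algebraMap A C a) = (algebraMap A (L ⊗[A] B) a) ⊗ₜ[B] (1 : C)
        rw [IsScalarTower.algebraMap_apply A B C,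
          Algebra.algebraMap_eq_smul_one (R := B) (A := C), TensorProduct.tmul_smul,
          TensorProduct.smul_tmul', Algebra.TensorProduct.algebraMap_apply',
          Algebra.smul_def, mul_one]
        rfl } with hfC
  set Φ : (L ⊗[A] C) →ₐ[A] ((L ⊗[A] B) ⊗[B] C) :=
    Algebra.TensorProduct.lift fL fC (fun _ _ => Commute.all _ _) with hΦ
  -- the backward map
  set gA : B →ₐ[A] C := IsScalarTower.toAlgHom A B C with hgA
  set Φ'1 : (L ⊗[A] B) →ₐ[B] (L ⊗[A] C) :=
    { toRingHom := (Algebra.TensorProduct.map (AlgHom.id A L) gA).toRingHom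
      commutes' := fun b => by
        show Algebra.TensorProduct.map (AlgHom.id A L) gA ((1 : L) ⊗ₜ[A] b) = _
        rw [Algebra.TensorProduct.map_tmul]
        rfl } with hΦ'1
  set Φ'2 : C →ₐ[B] (L ⊗[A] C) :=
    { toRingHom := (Algebra.TensorProduct.includeRight : C →ₐ[A] L ⊗[A] C).toRingHom
      commutes' := fun b => rfl } with hΦ'2
  set Φ' : ((L ⊗[A] B) ⊗[B] C) →ₐ[B] (L ⊗[A] C) :=
    Algebra.TensorProduct.lift Φ'1 Φ'2 (fun _ _ => Commute.all _ _) with hΦ'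
  have key : ∀ (l : L) (b : B) (c : C), Φ' ((l ⊗ₜ[A] b) ⊗ₜ[B] c) = l ⊗ₜ[A] (algebraMap B C b * c) := by
    intro l b c
    rw [hΦ', Algebra.TensorProduct.lift_tmul]
    show (Algebra.TensorProduct.map (AlgHom.id A L) gA) (l ⊗ₜ[A] b) * ((1 : L) ⊗ₜ[A] c) = _
    rw [Algebra.TensorProduct.map_tmul, Algebra.TensorProduct.tmul_mul_tmul, mul_one]
    rfl
  refine ⟨Φ.toRingHom, Φ'.toRingHom, ?_, ?_, key⟩
  · intro y
    induction y using TensorProduct.induction_on with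
    | zero => simp
    | tmul l c =>
      show Φ' (Φ (l ⊗ₜ[A] c)) = _
      rw [hΦ, Algebra.TensorProduct.lift_tmul, map_mul]
      have e1 : Φ' (fL l) = l ⊗ₜ[A] (1 : C) := by
        show Φ' ((l ⊗ₜ[A] (1 : B)) ⊗ₜ[B] (1 : C)) = _
        rw [key l 1 1, map_one, one_mul]
      have e2 : Φ' (fC c) = (1 : L) ⊗ₜ[A] c := by
        show Φ' (((1 : L) ⊗ₜ[A] (1 : B)) ⊗ₜ[B] c) = _
        rw [key 1 1 c, map_one, one_mul]
      rw [e1, e2, Algebra.TensorProduct.tmul_mul_tmul, mul_one, one_mul]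
    | add y1 y2 h1 h2 =>
      rw [map_add, map_add, h1, h2]
  · intro w
    induction w using TensorProduct.induction_on with
    | zero => simp
    | tmul y c =>
      induction y using TensorProduct.induction_on with
      | zero =>
        rw [TensorProduct.zero_tmul]
        simp
      | tmul l b =>
        show Φ (Φ' ((l ⊗ₜ[A] b) ⊗ₜ[B] c)) = _
        rw [key l b c, hΦ, Algebra.TensorProduct.lift_tmul, map_mul]
        have e3 : fC (algebraMap B C b) = ((1 : L) ⊗ₜ[A] b) ⊗ₜ[B] (1 : C) := by
          show (1 : L ⊗[A] B) ⊗ₜ[B] (algebraMap B C b) = _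
          rw [Algebra.algebraMap_eq_smul_one (R := B) (A := C), TensorProduct.tmul_smul,
            TensorProduct.smul_tmul']
          congr 1
          rw [Algebra.smul_def, mul_one]
          rfl
        have e4 : fL l * fC c = (l ⊗ₜ[A] (1 : B)) ⊗ₜ[B] c := by
          show (l ⊗ₜ[A] (1 : B)) ⊗ₜ[B] (1 : C) * (1 : L ⊗[A] B) ⊗ₜ[B] c = _
          rw [Algebra.TensorProduct.tmul_mul_tmul, mul_one, one_mul]
        rw [e3, show fL l * ((((1 : L) ⊗ₜ[A] b) ⊗ₜ[B] (1 : C)) * fC c)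
            = (((1 : L) ⊗ₜ[A] b) ⊗ₜ[B] (1 : C)) * (fL l * fC c) from by ring, e4,
          Algebra.TensorProduct.tmul_mul_tmul, Algebra.TensorProduct.tmul_mul_tmul,
          one_mul, one_mul, mul_one]
      | add y1 y2 h1 h2 =>
        rw [TensorProduct.add_tmul, map_add, map_add, h1, h2]
    | add w1 w2 h1 h2 =>
      rw [map_add, map_add, h1, h2]

set_option maxHeartbeats 1000000 in
set_option synthInstance.maxHeartbeats 400000 in
theorem isReducedRingHom_comp_and_descent {A B C : Type u}
    [CommRing A] [CommRing B] [CommRing C] (f : A →+* B) (g : B →+* C) :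
    (IsReducedRingHom f → IsReducedRingHom g → IsReducedRingHom (g.comp f)) ∧
    (IsReducedRingHom (g.comp f) → IsReducedRingHom g →
      (letI := g.toAlgebra; Module.FaithfullyFlat B C) → IsReducedRingHom f) := by
  constructor
  · rintro ⟨hf1, hf2⟩ ⟨hg1, hg2⟩
    letI iAB : Algebra A B := f.toAlgebra
    letI iBC : Algebra B C := g.toAlgebra
    letI iAC : Algebra A C := (g.comp f).toAlgebra
    haveI hT : IsScalarTower A B C := IsScalarTower.of_algebraMap_eq fun a => rfl
    haveI : Module.Flat A B := hf1
    haveI : Module.Flat B C := hg1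
    refine ⟨Module.Flat.trans A B C, ?_⟩
    intro L fieldL algAL
    letI : Algebra B (L ⊗[A] B) := Algebra.TensorProduct.rightAlgebra
    haveI : IsReduced (L ⊗[A] B) := hf2 L fieldL algAL
    haveI : IsReduced ((L ⊗[A] B) ⊗[B] C) := IsReducedRingHom.isReduced_tensor hg2
    obtain ⟨Φ, Φ', h1, h2, h3⟩ :=
      IsReducedRingHom.exists_tensor_homs (A := A) (B := B) (C := C) L
    exact isReduced_of_injective Φ (fun y1 y2 h => by rw [← h1 y1, ← h1 y2, h])
  · rintro ⟨hgf1, hgf2⟩ ⟨hg1, hg2⟩ hff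
    letI iAB : Algebra A B := f.toAlgebra
    letI iBC : Algebra B C := g.toAlgebra
    letI iAC : Algebra A C := (g.comp f).toAlgebra
    haveI hT : IsScalarTower A B C := IsScalarTower.of_algebraMap_eq fun a => rfl
    haveI : Module.Flat A C := hgf1
    haveI : Module.FaithfullyFlat B C := hff
    constructor
    · -- flatness descends
      rw [Module.Flat.iff_lTensor_injective']
      intro I
      have h0 : Function.Injective (LinearMap.lTensor C (Submodule.subtype I)) :=
        Module.Flat.lTensor_preserves_injective_linearMap _ (Submodule.injective_subtype I)
      set ψ : B ⊗[A] ↥I →ₗ[B] B ⊗[A] A := (Submodule.subtype I).baseChange B with hψ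
      have hsq : ∀ zz : C ⊗[B] (B ⊗[A] ↥I),
          (AlgebraTensorModule.cancelBaseChange A B B C A) ((LinearMap.lTensor C ψ) zz)
            = (LinearMap.lTensor C (Submodule.subtype I))
                ((AlgebraTensorModule.cancelBaseChange A B B C ↥I) zz) := by
        intro zz
        induction zz using TensorProduct.induction_on with
        | zero => simp
        | tmul cc ww =>
          induction ww using TensorProduct.induction_on with
          | zero => simp
          | tmul bb ii =>
            simp only [hψ, LinearMap.lTensor_tmul, LinearMap.baseChange_tmul,
              AlgebraTensorModule.cancelBaseChange_tmul, Submodule.coe_subtype, map_smul,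
              TensorProduct.smul_tmul']
          | add w1 w2 hh1 hh2 =>
            simp only [TensorProduct.tmul_add, map_add, hh1, hh2]
        | add z1 z2 hh1 hh2 =>
          simp only [map_add, hh1, hh2]
      have hinj2 : Function.Injective (LinearMap.lTensor C ψ) := by
        intro z1 z2 hz
        apply (AlgebraTensorModule.cancelBaseChange A B B C ↥I).injective
        apply h0
        rw [← hsq, ← hsq, hz]
      have hres := IsReducedRingHom.injective_of_lTensor_injective ψ hinj2
      rw [hψ] at hres
      rwa [LinearMap.baseChange_eq_ltensor] at hres
    · intro L fieldL algAL
      haveI : IsReduced (L ⊗[A] C) := hgf2 L fieldL algAL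
      letI : Algebra B (L ⊗[A] B) := Algebra.TensorProduct.rightAlgebra
      obtain ⟨Φ, Φ', h1, h2, h3⟩ :=
        IsReducedRingHom.exists_tensor_homs (A := A) (B := B) (C := C) L
      set Ψ : (L ⊗[A] B) →+* (L ⊗[A] C) :=
        Φ'.comp (Algebra.TensorProduct.includeLeftRingHom :
          (L ⊗[A] B) →+* ((L ⊗[A] B) ⊗[B] C)) with hΨ
      have hΨinj : Function.Injective Ψ := by
        intro w1 w2 hw
        have : w1 ⊗ₜ[B] (1 : C) = w2 ⊗ₜ[B] (1 : C) := by
          have := congrArg Φ hw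
          rw [hΨ] at this
          simpa only [RingHom.comp_apply, h2, Algebra.TensorProduct.includeLeftRingHom_apply] using this
        have hsub : (w1 - w2) ⊗ₜ[B] (1 : C) = 0 := by
          rw [TensorProduct.sub_tmul, this, sub_self]
        have := IsReducedRingHom.tmul_one_eq_zero (w1 - w2) hsub
        exact sub_eq_zero.1 this
      exact isReduced_of_injective Ψ hΨinj
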